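/- Let E be a row-finite directed graph and t ≥ 0 an integer. For every function f : E^t → ℂ and every vertex v of E, Σ_{λ ∈ E^{t+1}, s(λ)=v} f(λ[t])/n_λ = Σ_{γ ∈ E^t, s(γ)=v} f(γ)/n_γ, where λ[t] denotes the truncation of λ to length t (equal to λ itself if λ has length < t). Equivalently, Φ^{t+1}(f ∘ τ_{t,t+1}) = Φ^t(f). -/

import Mathlib

/-- A directed graph with vertex set `V` and edge set `E`. -/
structure DirGraph (V E : Type) where
  src : E → V
  rng : E → V

namespace DirGraph

variable {V E : Type}

/-- A vertex is a sink if no edge emanates from it. -/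
def IsSink (G : DirGraph V E) (v : V) : Prop := ∀ e : E, G.src e ≠ v

/-- A graph is row-finite if every vertex emits only finitely many edges. -/
def RowFinite (G : DirGraph V E) : Prop := ∀ v : V, {e : E | G.src e = v}.Finite

/-- `G.ChainFrom v l` : the list of edges `l` forms a path starting at the vertex `v`. -/
def ChainFrom (G : DirGraph V E) : V → List E → Prop
  | _, [] => True
  | v, e :: es => G.src e = v ∧ G.ChainFrom (G.rng e) es

@[simp] theorem chainFrom_nil (G : DirGraph V E) (v : V) : G.ChainFrom v [] ↔ True := Iff.rfl

@[simp] theorem chainFrom_cons (G : DirGraph V E) (v : V) (e : E) (es : List E) :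
    G.ChainFrom v (e :: es) ↔ G.src e = v ∧ G.ChainFrom (G.rng e) es := Iff.rfl

/-- A finite path in `G`: a starting vertex together with a compatible list of edges.
(Paths of length `0` are identified with their starting vertex.) -/
structure GPath (G : DirGraph V E) where
  start : V
  edges : List E
  ok : G.ChainFrom start edges

namespace GPath

variable {G : DirGraph V E}

/-- The range (terminal vertex) of a path. -/
def range (p : GPath G) : V := (p.edges.getLast?.map G.rng).getD p.start

/-- `n_λ = ∏_{i=1}^{|λ|} |s⁻¹(s(e_i))|` for a path `λ = e₁⋯e_k`; equals `1` for paths of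
length zero. -/
noncomputable def nval (p : GPath G) : ℕ :=
  (p.edges.map (fun e => {f : E | G.src f = G.src e}.ncard)).prod

end GPath

/-- Membership in `E^t`: paths of length exactly `t`, together with the paths of length
`< t` whose range is a sink. -/
def MemE (G : DirGraph V E) (t : ℕ) (p : GPath G) : Prop :=
  p.edges.length = t ∨ (p.edges.length < t ∧ G.IsSink p.range)

/-- The set `E^t` of paths of length `t` together with shorter paths ending in a sink. -/
def EtP (G : DirGraph V E) (t : ℕ) : Type _ := {p : GPath G // G.MemE t p}


theorem chainFrom_take {G : DirGraph V E} {v : V} {l : List E} (h : G.ChainFrom v l) (r : ℕ) :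
    G.ChainFrom v (l.take r) := by
  induction l generalizing v r with
  | nil => simp
  | cons e es ih =>
    cases r with
    | zero => simp
    | succ r => exact ⟨h.1, ih h.2 r⟩

/-- The initial segment of length `r` of a path (the whole path if its length is `≤ r`). -/
def GPath.take {G : DirGraph V E} (p : GPath G) (r : ℕ) : GPath G :=
  ⟨p.start, p.edges.take r, chainFrom_take p.ok r⟩

theorem range_take_of_le {G : DirGraph V E} {p : GPath G} {r : ℕ} (h : p.edges.length ≤ r) :
    (p.take r).range = p.range := by
  simp [GPath.take, GPath.range, List.take_of_length_le h]

theorem memE_take {G : DirGraph V E} {s : ℕ} {p : GPath G} (hp : G.MemE s p) {r : ℕ}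
    (hrs : r ≤ s) : G.MemE r (p.take r) := by
  rcases le_or_gt r p.edges.length with h | h
  · left
    simp only [GPath.take, List.length_take]
    omega
  · right
    refine ⟨?_, ?_⟩
    · simp only [GPath.take, List.length_take]
      omega
    · rw [range_take_of_le h.le]
      rcases hp with h1 | ⟨_, h2⟩
      · omega
      · exact h2

theorem memE_take_sink {G : DirGraph V E} {p : GPath G} (hp : G.IsSink p.range) (r : ℕ) :
    G.MemE r (p.take r) := by
  rcases le_or_gt r p.edges.length with h | h
  · left
    simp only [GPath.take, List.length_take]
    omega
  · right
    refine ⟨?_, ?_⟩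
    · simp only [GPath.take, List.length_take]
      omega
    · rw [range_take_of_le h.le]
      exact hp

/-- The truncation map `τ_{r,s} : E^s → E^r` (for `r ≤ s`), sending a path to its initial
segment of length `r` if its length is `≥ r`, and to itself otherwise. -/
def trunc (G : DirGraph V E) {r s : ℕ} (hrs : r ≤ s) (p : G.EtP s) : G.EtP r :=
  ⟨p.1.take r, memE_take p.2 hrs⟩


/-- The conditional expectation `Φ^t : C₀(E^t) → C₀(E⁰)`,
`(Φ^t f)(v) = Σ_{λ ∈ E^t, s(λ)=v} f(λ)/n_λ`. -/
noncomputable def Phi (G : DirGraph V E) (t : ℕ) (f : G.EtP t → ℂ) (v : V) : ℂ :=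
  ∑ᶠ p ∈ {q : G.EtP t | q.1.start = v}, f p / ((p : G.EtP t).1.nval : ℂ)

end DirGraph

open DirGraph

namespace DirGraph

variable {V E : Type} {G : DirGraph V E}

theorem GPath.ext' {p q : GPath G} (h1 : p.start = q.start) (h2 : p.edges = q.edges) :
    p = q := by
  cases p; cases q; cases h1; cases h2; rfl

theorem src_of_chain_append {v : V} {l : List E} {e : E} {l' : List E}
    (h : G.ChainFrom v (l ++ e :: l')) : G.src e = (l.getLast?.map G.rng).getD v := by
  induction l generalizing v with
  | nil => exact h.1
  | cons a as ih =>
    have := ih h.2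
    cases as with
    | nil => simpa using this
    | cons b bs => exact this

theorem chainFrom_append_singleton {v : V} {l : List E} {e : E}
    (h : G.ChainFrom v l) (he : G.src e = (l.getLast?.map G.rng).getD v) :
    G.ChainFrom v (l ++ [e]) := by
  induction l generalizing v with
  | nil => exact ⟨he, trivial⟩
  | cons a as ih =>
    refine ⟨h.1, ih h.2 ?_⟩
    cases as with
    | nil => simpa using he
    | cons b bs => exact he

theorem finite_chains (hG : G.RowFinite) :
    ∀ (t : ℕ) (v : V), {l : List E | G.ChainFrom v l ∧ l.length ≤ t}.Finite := by
  intro t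
  induction t with
  | zero =>
    intro v
    refine Set.Finite.subset (Set.finite_singleton ([] : List E)) ?_
    rintro l ⟨-, hl⟩
    simp only [Set.mem_singleton_iff]
    exact List.length_eq_zero_iff.mp (Nat.le_zero.mp hl)
  | succ t ih =>
    intro v
    refine Set.Finite.subset
      (Set.Finite.insert []
        ((hG v).biUnion (fun e _ => ((ih (G.rng e)).image (fun l => e :: l))))) ?_
    rintro l ⟨hc, hl⟩
    cases l with
    | nil => exact Set.mem_insert _ _
    | cons e es =>
      refine Set.mem_insert_of_mem _ ?_
      refine Set.mem_biUnion (hc.1 : G.src e = v) ?_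
      exact ⟨es, ⟨hc.2, by simpa using hl⟩, rfl⟩

theorem finite_EtP (hG : G.RowFinite) (t : ℕ) (v : V) :
    {q : G.EtP t | q.1.start = v}.Finite := by
  have hA : {p : GPath G | p.start = v ∧ p.edges.length ≤ t}.Finite := by
    refine Set.Finite.of_finite_image (f := GPath.edges) ?_ ?_
    · refine Set.Finite.subset (finite_chains hG t v) ?_
      rintro l ⟨p, ⟨hs, hl⟩, rfl⟩
      exact ⟨hs ▸ p.ok, hl⟩
    · rintro p ⟨hp, -⟩ q ⟨hq, -⟩ h
      exact GPath.ext' (hp.trans hq.symm) h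
  refine Set.Finite.of_finite_image (f := Subtype.val) ?_ (Subtype.val_injective.injOn)
  refine Set.Finite.subset hA ?_
  rintro p ⟨q, hq, rfl⟩
  refine ⟨hq, ?_⟩
  rcases q.2 with h | ⟨h, -⟩
  · omega
  · omega

theorem fiber_sum (hG : G.RowFinite) (t : ℕ) (f : G.EtP t → ℂ) (v : V) (γ : G.EtP t)
    (hγ : γ.1.start = v) (F : Finset (G.EtP (t + 1)))
    (hF : ∀ p, p ∈ F ↔ p.1.start = v ∧ G.trunc (Nat.le_succ t) p = γ) :
    ∑ p ∈ F, f (G.trunc (Nat.le_succ t) p) / ((p.1.nval : ℂ)) = f γ / (γ.1.nval : ℂ) := by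
  classical
  have hlen_le : γ.1.edges.length ≤ t := by
    rcases γ.2 with h | ⟨h, -⟩ <;> omega
  by_cases hsink : G.IsSink γ.1.range
  · -- fiber is the singleton {γ viewed in E^{t+1}}
    set γ' : G.EtP (t + 1) := ⟨γ.1, Or.inr ⟨by omega, hsink⟩⟩ with hγ'
    have hFs : F = {γ'} := by
      ext q
      rw [hF, Finset.mem_singleton]
      constructor
      · rintro ⟨hqv, hq⟩
        have hq1 : q.1.take t = γ.1 := congrArg Subtype.val hq
        have hstart : q.1.start = γ.1.start := by rw [← hq1]; rfl
        have hedges : q.1.edges.take t = γ.1.edges := by rw [← hq1]; rfl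
        have hqlen : q.1.edges.length ≤ t := by
          by_contra hlen
          have hlen1 : q.1.edges.length = t + 1 := by
            rcases q.2 with h | ⟨h, -⟩ <;> omega
          have hd : ∃ e l', q.1.edges.drop t = e :: l' := by
            have : q.1.edges.drop t ≠ [] := by
              rw [← List.length_pos_iff_ne_nil, List.length_drop]; omega
            exact List.exists_cons_of_ne_nil this
          obtain ⟨e, l', hd⟩ := hd
          have hch : G.ChainFrom q.1.start (q.1.edges.take t ++ e :: l') := by
            rw [← hd, List.take_append_drop]; exact q.1.ok
          have := src_of_chain_append hch
          rw [hedges, hstart] at this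
          exact hsink e this
        have : q.1 = γ.1 := by
          refine GPath.ext' hstart ?_
          rw [← hedges, List.take_of_length_le hqlen]
        exact Subtype.ext this
      · rintro rfl
        refine ⟨hγ, ?_⟩
        refine Subtype.ext ?_
        show γ.1.take t = γ.1
        exact GPath.ext' rfl (List.take_of_length_le hlen_le)
    have htr : G.trunc (Nat.le_succ t) γ' = γ := by
      refine Subtype.ext ?_
      exact GPath.ext' rfl (List.take_of_length_le hlen_le)
    rw [hFs, Finset.sum_singleton, htr]
  · -- γ has length exactly t and is extended by each edge out of its range
    have hlen : γ.1.edges.length = t := by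
      rcases γ.2 with h | ⟨-, h⟩
      · exact h
      · exact absurd h hsink
    set N : Finset E := (hG γ.1.range).toFinset with hN
    have hrng : ∀ e ∈ N, G.src e = γ.1.range := by
      intro e he
      rwa [hN, Set.Finite.mem_toFinset] at he
    have hNne : N.Nonempty := by
      by_contra hne
      refine hsink (fun e hse => ?_)
      exact hne ⟨e, by rw [hN, Set.Finite.mem_toFinset]; exact hse⟩
    set k : ℕ := N.card with hk
    have hk0 : (k : ℂ) ≠ 0 := by
      exact Nat.cast_ne_zero.mpr (Finset.card_pos.mpr hNne).ne'
    -- the extension map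
    set jA : {x // x ∈ N} → G.EtP (t + 1) := fun e =>
      ⟨⟨γ.1.start, γ.1.edges ++ [e.1],
        chainFrom_append_singleton γ.1.ok (hrng e.1 e.2)⟩,
        Or.inl (by simp [hlen])⟩ with hjA
    have htrjA : ∀ e, G.trunc (Nat.le_succ t) (jA e) = γ := by
      intro e
      refine Subtype.ext (GPath.ext' rfl ?_)
      show (γ.1.edges ++ [e.1]).take t = γ.1.edges
      exact List.take_left' hlen
    have hFim : F = N.attach.image jA := by
      ext q
      rw [hF, Finset.mem_image]
      constructor
      · rintro ⟨hqv, hq⟩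
        have hq1 : q.1.take t = γ.1 := congrArg Subtype.val hq
        have hstart : q.1.start = γ.1.start := by rw [← hq1]; rfl
        have hedges : q.1.edges.take t = γ.1.edges := by rw [← hq1]; rfl
        have hqge : t ≤ q.1.edges.length := by
          have := congrArg List.length hedges
          rw [List.length_take] at this
          omega
        have hqlen : q.1.edges.length = t + 1 := by
          rcases q.2 with h | ⟨h, hsk⟩
          · exact h
          · exfalso
            have hqt : q.1.edges.length = t := by omega
            have : q.1 = γ.1 := by
              refine GPath.ext' hstart ?_
              rw [← hedges, List.take_of_length_le (le_of_eq hqt)]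
            rw [this] at hsk
            exact hsink hsk
        have hd : ∃ e, q.1.edges.drop t = [e] := by
          refine List.length_eq_one_iff.mp ?_
          rw [List.length_drop]; omega
        obtain ⟨e, hd⟩ := hd
        have hqe : q.1.edges = γ.1.edges ++ [e] := by
          rw [← hedges, ← hd, List.take_append_drop]
        have hch : G.ChainFrom q.1.start (γ.1.edges ++ e :: []) := by
          rw [← hqe]; exact q.1.ok
        have hse : G.src e = γ.1.range := by
          have := src_of_chain_append hch
          rwa [hstart] at this
        have heN : e ∈ N := by rw [hN, Set.Finite.mem_toFinset]; exact hse
        refine ⟨⟨e, heN⟩, Finset.mem_attach _ _, ?_⟩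
        refine Subtype.ext (GPath.ext' ?_ ?_)
        · exact hstart.symm
        · exact hqe.symm
      · rintro ⟨e, -, rfl⟩
        exact ⟨hγ, htrjA e⟩
    have hinj : ∀ x ∈ N.attach, ∀ y ∈ N.attach, jA x = jA y → x = y := by
      intro x _ y _ h
      have := congrArg (fun q => (Subtype.val q).edges) h
      simp only [hjA] at this
      have : [x.1] = [y.1] := List.append_cancel_left this
      exact Subtype.ext (List.singleton_injective this)
    have hnval : ∀ e : {x // x ∈ N}, ((jA e).1.nval : ℂ) = (γ.1.nval : ℂ) * k := by
      intro e
      have hc : {f' : E | G.src f' = G.src e.1}.ncard = k := by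
        rw [hrng e.1 e.2, hk, hN, Set.ncard_eq_toFinset_card _ (hG γ.1.range)]
      have hnvalN : (jA e).1.nval = γ.1.nval * k := by
        show ((γ.1.edges ++ [e.1]).map (fun e => {f : E | G.src f = G.src e}.ncard)).prod = _
        rw [List.map_append, List.prod_append]
        simp only [List.map_cons, List.map_nil, List.prod_cons, List.prod_nil, mul_one, hc]
        rfl
      rw [hnvalN, Nat.cast_mul]
    rw [hFim, Finset.sum_image hinj]
    have : ∀ e ∈ N.attach,
        f (G.trunc (Nat.le_succ t) (jA e)) / ((jA e).1.nval : ℂ)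
          = f γ / ((γ.1.nval : ℂ) * k) := by
      intro e _
      rw [htrjA e, hnval e]
    rw [Finset.sum_congr rfl this, Finset.sum_const, Finset.card_attach, ← hk,
      nsmul_eq_mul, mul_comm, div_mul_eq_mul_div, mul_div_mul_right _ _ hk0]

end DirGraph


theorem finsum_mem_eq_sum'' {α M : Type*} [AddCommMonoid M] (f : α → M) {s : Set α}
    (hs : s.Finite) : ∑ᶠ i ∈ s, f i = ∑ i ∈ hs.toFinset, f i := by
  have := finsum_mem_coe_finset (s := hs.toFinset) f
  rw [Set.Finite.coe_toFinset] at this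
  rw [← this]


/-- For a row-finite graph `E`, `t ≥ 0`, `f : E^t → ℂ` and a vertex `v`:
`Σ_{λ ∈ E^{t+1}, s(λ)=v} f(λ[t])/n_λ = Σ_{γ ∈ E^t, s(γ)=v} f(γ)/n_γ`, i.e.
`Φ^{t+1}(f ∘ τ_{t,t+1}) = Φ^t(f)`. -/
theorem Phi_succ_comp_trunc {V E : Type} (G : DirGraph V E) (hG : G.RowFinite)
    (t : ℕ) (f : G.EtP t → ℂ) (v : V) :
    G.Phi (t + 1) (fun p => f (G.trunc (Nat.le_succ t) p)) v = G.Phi t f v := by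
  classical
  have hS := finite_EtP hG (t + 1) v
  have hT := finite_EtP hG t v
  rw [Phi, Phi, finsum_mem_eq_sum'' _ hS, finsum_mem_eq_sum'' _ hT]
  have hmap : ∀ p ∈ hS.toFinset, G.trunc (Nat.le_succ t) p ∈ hT.toFinset := by
    intro p hp
    rw [Set.Finite.mem_toFinset] at hp ⊢
    exact hp
  rw [← Finset.sum_fiberwise_of_maps_to hmap]
  refine Finset.sum_congr rfl ?_
  intro γ hγ
  refine fiber_sum hG t f v γ ((Set.Finite.mem_toFinset hT).mp hγ) _ ?_
  intro p
  rw [Finset.mem_filter, Set.Finite.mem_toFinset]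
  rfl
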